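/- Let N ≥ 1 be an integer and let α ≥ N + 2 be an integer. Then there exists a unique s ∈ (1/2, 1] satisfying (2s − 1)·(α − 1)^{2s−1} = 1 + N, and for this s one has dim_H(F_{α,N}) ≤ s. -/

import Mathlib

open MeasureTheory Filter Set
open scoped ENNReal

/-- The `N`-expansion map `T_N : [0,1] → [0,1]`,
`T_N x = N/x - ⌊N/x⌋` for `x ≠ 0`, `T_N 0 = 0`. -/
noncomputable def TN (N : ℕ) (x : ℝ) : ℝ :=
  if x = 0 then 0 else (N : ℝ) / x - (⌊(N : ℝ) / x⌋ : ℝ)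

/-- `digit N n x` is the `(n+1)`-st digit `ε_{n+1}(x)` of the `N`-expansion of `x`,
i.e. `ε_m(x) = digit N (m-1) x` for `m ≥ 1`. -/
noncomputable def digit (N : ℕ) (n : ℕ) (x : ℝ) : ℤ :=
  ⌊(N : ℝ) / ((TN N)^[n] x)⌋

/-- The set `E_M` of irrationals in `(0,1)` all of whose `N`-expansion digits lie in
`{N, …, M}`. -/
noncomputable def EM (N M : ℕ) : Set ℝ :=
  {x | x ∈ Set.Ioo (0 : ℝ) 1 ∧ Irrational x ∧
    ∀ n : ℕ, (N : ℤ) ≤ digit N n x ∧ digit N n x ≤ (M : ℤ)}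

/-- The set `F_{α,N}` of irrationals in `(0,1)` all of whose `N`-expansion digits
are at least `α`. -/
noncomputable def Fset (N : ℕ) (α : ℝ) : Set ℝ :=
  {x | x ∈ Set.Ioo (0 : ℝ) 1 ∧ Irrational x ∧ ∀ n : ℕ, α ≤ (digit N n x : ℝ)}

/-- The set `F_N` of irrationals in `(0,1)` whose `N`-expansion digits tend to infinity. -/
noncomputable def FNset (N : ℕ) : Set ℝ :=
  {x | x ∈ Set.Ioo (0 : ℝ) 1 ∧ Irrational x ∧
    Filter.Tendsto (fun n => digit N n x) Filter.atTop Filter.atTop}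

/-- Convergent denominators of the `N`-expansion with digit sequence `ε`
(where `ε i` is the `(i+1)`-st digit `ε_{i+1}`), shifted by one:
`qden N ε (n+1) = q_n`, so `qden N ε 0 = q_{-1} = 0`, `qden N ε 1 = q_0 = 1`,
and `q_n = ε_n q_{n-1} + N q_{n-2}`. -/
def qden (N : ℕ) (ε : ℕ → ℤ) : ℕ → ℤ
  | 0 => 0
  | 1 => 1
  | (n + 2) => ε n * qden N ε (n + 1) + (N : ℤ) * qden N ε n

/-- Convergent numerators of the `N`-expansion with digit sequence `ε`, shifted by one:
`pnum N ε (n+1) = p_n`, so `pnum N ε 0 = p_{-1} = 1`, `pnum N ε 1 = p_0 = 0`,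
and `p_n = ε_n p_{n-1} + N p_{n-2}`. -/
def pnum (N : ℕ) (ε : ℕ → ℤ) : ℕ → ℤ
  | 0 => 1
  | 1 => 0
  | (n + 2) => ε n * pnum N ε (n + 1) + (N : ℤ) * pnum N ε n

/-- The fundamental interval `I_n(ε_1, …, ε_n)`: irrationals in `(0,1)` whose first `n`
`N`-expansion digits are `ε 0, …, ε (n-1)` (i.e. `ε_i(x) = ε (i-1)` for `1 ≤ i ≤ n`). -/
noncomputable def fundInterval (N : ℕ) (n : ℕ) (ε : ℕ → ℤ) : Set ℝ :=
  {x | x ∈ Set.Ioo (0 : ℝ) 1 ∧ Irrational x ∧ ∀ i < n, digit N i x = ε i}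

lemma irr_Ndiv {N : ℕ} (hN : 1 ≤ N) {x : ℝ} (hx : Irrational x) :
    Irrational ((N : ℝ) / x) := by
  have := hx.intCast_div (m := (N : ℤ)) (by omega)
  simpa using this

lemma TN_irr {N : ℕ} (hN : 1 ≤ N) {x : ℝ} (hx : Irrational x) (hx0 : x ≠ 0) :
    Irrational (TN N x) := by
  rw [TN, if_neg hx0]
  exact (irr_Ndiv hN hx).sub_intCast _

lemma TN_mem {N : ℕ} (hN : 1 ≤ N) {x : ℝ} (hx : Irrational x) (hx0 : x ≠ 0) :
    TN N x ∈ Set.Ioo (0:ℝ) 1 := by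
  have h1 : TN N x = Int.fract ((N : ℝ) / x) := by rw [TN, if_neg hx0]; rfl
  constructor
  · rcases lt_or_eq_of_le (Int.fract_nonneg ((N : ℝ)/x)) with h | h
    · rw [h1]; exact h
    · exfalso
      have : Irrational (Int.fract ((N:ℝ)/x)) := by
        rw [Int.fract]; exact (irr_Ndiv hN hx).sub_intCast _
      rw [← h] at this; exact this ⟨0, by simp⟩
  · rw [h1]; exact Int.fract_lt_one _

lemma digit_succ (N : ℕ) (i : ℕ) (x : ℝ) : digit N (i+1) x = digit N i (TN N x) := by
  rw [digit, digit, Function.iterate_succ_apply]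

lemma digit_zero_add (N : ℕ) {x : ℝ} (hx0 : x ≠ 0) :
    ((digit N 0 x : ℝ)) + TN N x = (N : ℝ) / x := by
  rw [digit, TN, if_neg hx0]; simp

lemma mem_shift {N : ℕ} (hN : 1 ≤ N) {n : ℕ} {ε : ℕ → ℤ} {x : ℝ}
    (hx : x ∈ fundInterval N (n+1) ε) :
    TN N x ∈ fundInterval N n (fun i => ε (i+1)) := by
  obtain ⟨hx1, hx2, hx3⟩ := hx
  exact ⟨TN_mem hN hx2 (ne_of_gt hx1.1), TN_irr hN hx2 (ne_of_gt hx1.1),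
    fun i hi => by rw [← digit_succ]; exact hx3 (i+1) (by omega)⟩
lemma diam_fund {N : ℕ} (hN : 1 ≤ N) : ∀ (n : ℕ) (ε : ℕ → ℤ), (∀ i < n, 1 ≤ ε i) →
    ∀ x ∈ fundInterval N n ε, ∀ y ∈ fundInterval N n ε,
    |x - y| ≤ ∏ i ∈ Finset.range n, (N : ℝ) / (ε i)^2 := by
  intro n
  induction n with
  | zero =>
    intro ε _ x hx y hy
    simp only [Finset.range_zero, Finset.prod_empty]
    have h1 := hx.1; have h2 := hy.1
    rw [abs_sub_le_iff]; constructor <;> nlinarith [h1.1, h1.2, h2.1, h2.2]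
  | succ n ih =>
    intro ε hε x hx y hy
    have hx0 : (0:ℝ) < x := hx.1.1
    have hy0 : (0:ℝ) < y := hy.1.1
    have hε0 : (1:ℝ) ≤ (ε 0 : ℝ) := by exact_mod_cast hε 0 (by omega)
    -- a = N/x, b = N/y
    set a := (N:ℝ)/x with ha
    set b := (N:ℝ)/y with hb
    have hdx : (ε 0 : ℝ) + TN N x = a := by
      rw [← hx.2.2 0 (by omega)]; exact digit_zero_add N hx0.ne'
    have hdy : (ε 0 : ℝ) + TN N y = b := by
      rw [← hy.2.2 0 (by omega)]; exact digit_zero_add N hy0.ne'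
    have hTx := TN_mem hN hx.2.1 hx0.ne'
    have hTy := TN_mem hN hy.2.1 hy0.ne'
    have hae : (ε 0 : ℝ) ≤ a := by rw [← hdx]; linarith [hTx.1]
    have hbe : (ε 0 : ℝ) ≤ b := by rw [← hdy]; linarith [hTy.1]
    have ha0 : (0:ℝ) < a := lt_of_lt_of_le (by linarith) hae
    have hb0 : (0:ℝ) < b := lt_of_lt_of_le (by linarith) hbe
    have hxa : x = (N:ℝ)/a := by field_simp [ha]; rw [ha]; field_simp
    have hyb : y = (N:ℝ)/b := by field_simp [hb]; rw [hb]; field_simp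
    have hN0 : (0:ℝ) < N := by exact_mod_cast hN
    have habs : |b - a| = |TN N x - TN N y| := by
      rw [← hdx, ← hdy, show ((ε 0:ℝ) + TN N y) - ((ε 0:ℝ) + TN N x)
        = -(TN N x - TN N y) from by ring, abs_neg]
    have key : |x - y| = (N:ℝ) * |TN N x - TN N y| / (a * b) := by
      rw [← habs]
      rw [hxa, hyb, div_sub_div _ _ ha0.ne' hb0.ne']
      rw [abs_div, abs_of_pos (by positivity : (0:ℝ) < a*b)]
      rw [show (N:ℝ) * b - a * (N:ℝ) = (N:ℝ) * (b - a) from by ring, abs_mul,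
        abs_of_pos hN0]
    have hT := ih (fun i => ε (i+1)) (fun i hi => hε (i+1) (by omega))
      _ (mem_shift hN hx) _ (mem_shift hN hy)
    rw [Finset.prod_range_succ', key]
    have hab : (ε 0:ℝ)^2 ≤ a * b := by nlinarith
    calc (N:ℝ) * |TN N x - TN N y| / (a * b)
        ≤ (N:ℝ) * |TN N x - TN N y| / ((ε 0:ℝ)^2) := by
          apply div_le_div_of_nonneg_left (by positivity) (by positivity) hab
      _ = |TN N x - TN N y| * ((N:ℝ)/(ε 0:ℝ)^2) := by ring
      _ ≤ (∏ i ∈ Finset.range n, (N:ℝ)/(ε (i+1))^2) * ((N:ℝ)/(ε 0:ℝ)^2) := by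
          apply mul_le_mul_of_nonneg_right hT (by positivity)
lemma exist_s {N : ℕ} (hN : 1 ≤ N) {α : ℤ} (hα : (N : ℤ) + 2 ≤ α) :
    ∃ s ∈ Set.Ioc (1/2 : ℝ) 1,
      (2 * s - 1) * ((α : ℝ) - 1) ^ (2 * s - 1) = 1 + (N : ℝ) ∧
      ∀ s' ∈ Set.Ioc (1/2 : ℝ) 1,
        (2 * s' - 1) * ((α : ℝ) - 1) ^ (2 * s' - 1) = 1 + (N : ℝ) → s' = s := by
  set β : ℝ := (α : ℝ) - 1 with hβ
  have hβ2 : (2:ℝ) ≤ β := by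
    have : ((N:ℝ) + 2) ≤ (α:ℝ) := by exact_mod_cast hα
    have : (1:ℝ) ≤ (N:ℝ) := by exact_mod_cast hN
    simp only [hβ]; linarith
  have hβ1 : (1:ℝ) < β := by linarith
  have hL : 0 < Real.log β := Real.log_pos hβ1
  set f : ℝ → ℝ := fun s => (2*s-1) * β ^ (2*s-1) with hf
  have hfe : ∀ s : ℝ, f s = (2*s-1) * Real.exp ((2*s-1) * Real.log β) := by
    intro s; rw [hf]; simp only
    rw [Real.rpow_def_of_pos (by linarith)]
    ring_nf
  have hcont : Continuous f := by
    rw [show f = fun s => (2*s-1) * Real.exp ((2*s-1) * Real.log β) from funext hfe]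
    fun_prop
  have hmono : StrictMonoOn f (Set.Ici (1/2 : ℝ)) := by
    intro s hs t ht hst
    rw [hfe, hfe]
    have h1 : (0:ℝ) ≤ 2*s-1 := by simp at hs; linarith
    have h2 : 2*s-1 < 2*t-1 := by linarith
    have h3 : Real.exp ((2*s-1) * Real.log β) ≤ Real.exp ((2*t-1) * Real.log β) := by
      apply Real.exp_le_exp.mpr; nlinarith
    have h4 : 0 < Real.exp ((2*s-1) * Real.log β) := Real.exp_pos _
    nlinarith
  have h12 : f (1/2 : ℝ) = 0 := by rw [hfe]; norm_num
  have hf1 : f 1 = β := by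
    rw [hf]; norm_num [Real.rpow_one]
  have hmem : (1 + (N:ℝ)) ∈ Set.Ioc (f (1/2:ℝ)) (f 1) := by
    rw [h12, hf1]
    constructor
    · positivity
    · have : ((N:ℤ) + 2 : ℝ) ≤ (α:ℝ) := by exact_mod_cast hα
      push_cast at this; simp only [hβ]; linarith
  have := intermediate_value_Ioc (by norm_num : (1/2:ℝ) ≤ 1) hcont.continuousOn hmem
  obtain ⟨s, hs, hfs⟩ := this
  refine ⟨s, hs, hfs, fun s' hs' hfs' => ?_⟩
  have : f s' = f s := by rw [hfs]; exact hfs'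
  exact hmono.injOn (Set.mem_Ici.mpr hs'.1.le) (Set.mem_Ici.mpr hs.1.le) this

lemma mvt_step {c : ℝ} (hc : 0 < c) {b : ℝ} (hb : 1 ≤ b) :
    c * (b+1) ^ (-(c+1)) ≤ b ^ (-c) - (b+1) ^ (-c) := by
  have hb0 : (0:ℝ) < b := by linarith
  obtain ⟨ξ, hξ, hslope⟩ := exists_hasDerivAt_eq_slope (fun t : ℝ => t ^ (-c))
    (fun t => (-c) * t ^ (-c - 1)) (by linarith : b < b + 1)
    (fun t ht => by
      have ht0 : t ≠ 0 := by have := ht.1; intro h; rw [h] at this; linarith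
      exact (Real.hasDerivAt_rpow_const (Or.inl ht0)).continuousAt.continuousWithinAt)
    (fun t ht => Real.hasDerivAt_rpow_const
      (Or.inl (by have := ht.1; intro h; rw [h] at this; linarith)))
  have hξ0 : 0 < ξ := lt_trans hb0 hξ.1
  have hstep : b ^ (-c) - (b+1) ^ (-c) = c * ξ ^ (-c-1) := by
    have := hslope
    field_simp at this
    linarith [this]
  rw [hstep]
  have hmono : (b+1) ^ (-(c+1)) ≤ ξ ^ (-c-1) := by
    rw [show -c-1 = -(c+1) by ring]
    rw [Real.rpow_neg (by linarith), Real.rpow_neg hξ0.le]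
    have h1 : ξ ^ (c+1) ≤ (b+1) ^ (c+1) :=
      Real.rpow_le_rpow hξ0.le hξ.2.le (by linarith)
    exact inv_anti₀ (Real.rpow_pos_of_pos hξ0 _) h1
  nlinarith [hmono, hc.le]

lemma tail_sum {N : ℕ} {s β : ℝ} (hβ : (2:ℝ) ≤ β)
    (hs : s ∈ Set.Ioc (1/2 : ℝ) 1)
    (heq : (2*s-1) * β ^ (2*s-1) = 1 + (N : ℝ)) :
    ∑' k : ℕ, ENNReal.ofReal ((β + 1 + (k:ℝ)) ^ (-(2*s)))
      ≤ ENNReal.ofReal (1 / (1 + (N:ℝ))) := by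
  set c : ℝ := 2*s - 1 with hc
  have hc0 : 0 < c := by simp only [hc]; have := hs.1; linarith
  set g : ℕ → ℝ := fun k => (β + (k:ℝ)) ^ (-c) with hg
  have hgnn : ∀ k, 0 ≤ g k := fun k => Real.rpow_nonneg (by positivity) _
  have hstep : ∀ k : ℕ, (β + 1 + (k:ℝ)) ^ (-(2*s)) ≤ (g k - g (k+1)) / c := by
    intro k
    have hb : (1:ℝ) ≤ β + k := by
      have : (0:ℝ) ≤ (k:ℝ) := Nat.cast_nonneg k
      linarith
    have := mvt_step hc0 hb
    rw [le_div_iff₀ hc0]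
    have e1 : β + 1 + (k:ℝ) = (β + k) + 1 := by ring
    have e2 : -(2*s) = -(c+1) := by simp only [hc]; ring
    rw [e1, e2, mul_comm]
    have e3 : g (k+1) = ((β + k) + 1) ^ (-c) := by simp only [hg]; push_cast; ring_nf
    rw [e3]
    exact this
  have hsum : ∀ n : ℕ, ∑ k ∈ Finset.range n, ENNReal.ofReal ((β + 1 + (k:ℝ)) ^ (-(2*s)))
      ≤ ENNReal.ofReal (g 0 / c) := by
    intro n
    rw [← ENNReal.ofReal_sum_of_nonneg (fun k _ => Real.rpow_nonneg (by positivity) _)]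
    apply ENNReal.ofReal_le_ofReal
    calc ∑ k ∈ Finset.range n, (β + 1 + (k:ℝ)) ^ (-(2*s))
        ≤ ∑ k ∈ Finset.range n, (g k - g (k+1)) / c :=
          Finset.sum_le_sum (fun k _ => hstep k)
      _ = (∑ k ∈ Finset.range n, (g k - g (k+1))) / c := by rw [Finset.sum_div]
      _ = (g 0 - g n) / c := by rw [Finset.sum_range_sub' g n]
      _ ≤ g 0 / c := by
          gcongr
          linarith [hgnn n]
  have hval : g 0 / c = 1 / (1 + (N:ℝ)) := by
    have hβc : (0:ℝ) < β ^ c := Real.rpow_pos_of_pos (by linarith) _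
    simp only [hg, Nat.cast_zero, add_zero]
    rw [Real.rpow_neg (by linarith : (0:ℝ) ≤ β), ← heq]
    field_simp
  rw [ENNReal.tsum_eq_iSup_sum' (fun n => Finset.range n)
    (fun t => Finset.exists_nat_subset_range t)]
  apply iSup_le
  intro n
  rw [← hval]
  exact hsum n

lemma tsum_pi_prod {E : Type*} [Countable E] (h : E → ℝ≥0∞) :
    ∀ n : ℕ, ∑' f : Fin n → E, ∏ i, h (f i) = (∑' e, h e) ^ n := by
  intro n
  induction n with
  | zero =>
    haveI : Unique (Fin 0 → E) := ⟨⟨Fin.elim0⟩, fun f => funext fun i => i.elim0⟩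
    simp only [pow_zero, Finset.univ_eq_empty, Finset.prod_empty]
    exact tsum_eq_single default fun b hb => absurd (Unique.eq_default b) hb
  | succ n ih =>
    rw [← (Fin.consEquiv (fun _ : Fin (n+1) => E)).tsum_eq]
    have : ∀ p : E × (Fin n → E),
        (∏ i, h ((Fin.consEquiv (fun _ : Fin (n+1) => E)) p i))
          = h p.1 * ∏ i, h (p.2 i) := by
      intro p
      rw [Fin.prod_univ_succ]
      simp [Fin.consEquiv]
    calc ∑' p : E × (Fin n → E), ∏ i, h ((Fin.consEquiv (fun _ : Fin (n+1) => E)) p i)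
        = ∑' p : E × (Fin n → E), h p.1 * ∏ i, h (p.2 i) := by
          exact tsum_congr this
      _ = ∑' e : E, ∑' f : Fin n → E, h e * ∏ i, h (f i) := ENNReal.tsum_prod'
      _ = ∑' e : E, h e * ∑' f : Fin n → E, ∏ i, h (f i) := by
          congr 1; funext e; rw [ENNReal.tsum_mul_left]
      _ = (∑' e : E, h e) * (∑' f : Fin n → E, ∏ i, h (f i)) := ENNReal.tsum_mul_right
      _ = (∑' e, h e) ^ (n+1) := by rw [ih]; ring

lemma sum_hE {N : ℕ} (hN : 1 ≤ N) {α : ℤ} (hα : (N : ℤ) + 2 ≤ α) {s : ℝ}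
    (hs : s ∈ Set.Ioc (1/2 : ℝ) 1)
    (heq : (2*s-1) * ((α:ℝ) - 1) ^ (2*s-1) = 1 + (N : ℝ)) :
    ∑' e : {e : ℤ // α ≤ e}, ENNReal.ofReal (((N:ℝ) / (e:ℝ)^2) ^ s)
      ≤ ENNReal.ofReal ((N:ℝ) ^ s / (1 + (N:ℝ))) := by
  have hαR : ((N:ℝ)) + 2 ≤ (α:ℝ) := by exact_mod_cast hα
  have hN1 : (1:ℝ) ≤ (N:ℝ) := by exact_mod_cast hN
  set E := {e : ℤ // α ≤ e}
  set eqv : ℕ ≃ E :=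
    { toFun := fun k => ⟨α + k, by omega⟩
      invFun := fun e => (e.1 - α).toNat
      left_inv := fun k => by simp
      right_inv := fun e => by
        apply Subtype.ext
        have := e.2
        simp only
        omega }
  rw [← eqv.tsum_eq]
  have hterm : ∀ k : ℕ, ((N:ℝ) / (((eqv k : E) : ℤ):ℝ)^2) ^ s
      = (N:ℝ)^s * (((α:ℝ) - 1) + 1 + (k:ℝ)) ^ (-(2*s)) := by
    intro k
    have hval0 : ((eqv k : E) : ℤ) = α + k := rfl
    have hval : (((eqv k : E) : ℤ):ℝ) = (α:ℝ) + k := by rw [hval0]; push_cast; ring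
    rw [hval]
    set x : ℝ := (α:ℝ) + k with hx
    rw [show (α:ℝ) - 1 + 1 + (k:ℝ) = x from by simp only [hx]; ring]
    have hx0 : (0:ℝ) < x := by
      have : (0:ℝ) ≤ (k:ℝ) := Nat.cast_nonneg k
      simp only [hx]; linarith
    have e2 : x^2 = x ^ ((2:ℕ):ℝ) := by rw [Real.rpow_natCast]
    rw [Real.div_rpow (by positivity) (by positivity), e2, ← Real.rpow_mul hx0.le]
    rw [show ((2:ℕ):ℝ) * s = 2*s by norm_num, Real.rpow_neg hx0.le, div_eq_mul_inv]
  calc ∑' k : ℕ, ENNReal.ofReal (((N:ℝ) / (((eqv k : E) : ℤ):ℝ)^2) ^ s)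
      = ∑' k : ℕ, ENNReal.ofReal ((N:ℝ)^s) *
          ENNReal.ofReal ((((α:ℝ) - 1) + 1 + (k:ℝ)) ^ (-(2*s))) := by
        apply tsum_congr; intro k
        rw [hterm k, ENNReal.ofReal_mul (by positivity)]
    _ = ENNReal.ofReal ((N:ℝ)^s) *
          ∑' k : ℕ, ENNReal.ofReal ((((α:ℝ) - 1) + 1 + (k:ℝ)) ^ (-(2*s))) :=
        ENNReal.tsum_mul_left
    _ ≤ ENNReal.ofReal ((N:ℝ)^s) * ENNReal.ofReal (1 / (1 + (N:ℝ))) := by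
        apply mul_le_mul_right
        exact tail_sum (by linarith) hs heq
    _ = ENNReal.ofReal ((N:ℝ)^s / (1 + (N:ℝ))) := by
        rw [← ENNReal.ofReal_mul (by positivity)]
        congr 1; ring

lemma ofReal_fprod {ι : Type*} (t : Finset ι) (f : ι → ℝ) (h : ∀ i ∈ t, 0 ≤ f i) :
    ENNReal.ofReal (∏ i ∈ t, f i) = ∏ i ∈ t, ENNReal.ofReal (f i) := by
  induction t using Finset.cons_induction with
  | empty => simp
  | cons a u ha ih =>
    rw [Finset.prod_cons, Finset.prod_cons,
      ENNReal.ofReal_mul (h a (Finset.mem_cons_self a u)),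
      ih (fun i hi => h i (Finset.mem_cons_of_mem hi))]

lemma measure_zero {N : ℕ} (hN : 1 ≤ N) {α : ℤ} (hα : (N : ℤ) + 2 ≤ α) {s : ℝ}
    (hs : s ∈ Set.Ioc (1/2 : ℝ) 1)
    (heq : (2*s-1) * ((α:ℝ) - 1) ^ (2*s-1) = 1 + (N : ℝ)) :
    μH[s] (Fset N (α:ℝ)) = 0 := by
  have hαR : ((N:ℝ)) + 2 ≤ (α:ℝ) := by exact_mod_cast hα
  have hN1 : (1:ℝ) ≤ (N:ℝ) := by exact_mod_cast hN
  have hα3 : (3:ℝ) ≤ (α:ℝ) := by linarith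
  have hs0 : (0:ℝ) < s := by have := hs.1; linarith
  set E := {e : ℤ // α ≤ e} with hE
  -- the digit function used for covering
  set εf : ∀ n : ℕ, (Fin n → E) → ℕ → ℤ :=
    fun n f i => if h : i < n then (f ⟨i, h⟩ : ℤ) else 1 with hεf
  have hεf_ge : ∀ n (f : Fin n → E), ∀ i < n, α ≤ εf n f i := by
    intro n f i hi
    simp only [hεf, dif_pos hi]
    exact (f ⟨i, hi⟩).2
  have hεf_pos : ∀ n (f : Fin n → E), ∀ i < n, 1 ≤ εf n f i := by
    intro n f i hi; have := hεf_ge n f i hi; omega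
  have hεf_posR : ∀ n (f : Fin n → E), ∀ i < n, (3:ℝ) ≤ ((εf n f i : ℤ):ℝ) := by
    intro n f i hi
    have h1 := hεf_ge n f i hi
    have : ((α:ℤ):ℝ) ≤ ((εf n f i : ℤ):ℝ) := by exact_mod_cast h1
    linarith
  set t : ∀ n : ℕ, (Fin n → E) → Set ℝ :=
    fun n f => fundInterval N n (εf n f) with ht
  set q : ℝ := (N:ℝ) / (α:ℝ)^2 with hq
  have hq0 : 0 ≤ q := by positivity
  have hq1 : q < 1 := by
    rw [hq, div_lt_one (by positivity)]
    nlinarith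
  -- diameter bound
  have hdiam : ∀ n (f : Fin n → E),
      EMetric.diam (t n f) ≤ ENNReal.ofReal (∏ i ∈ Finset.range n,
        (N:ℝ) / ((εf n f i : ℤ):ℝ)^2) := by
    intro n f
    apply EMetric.diam_le
    intro x hx y hy
    rw [edist_dist, Real.dist_eq]
    exact ENNReal.ofReal_le_ofReal (diam_fund hN n (εf n f) (hεf_pos n f) x hx y hy)
  have hprod_le : ∀ n (f : Fin n → E),
      ∏ i ∈ Finset.range n, (N:ℝ) / ((εf n f i : ℤ):ℝ)^2 ≤ q ^ n := by
    intro n f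
    calc ∏ i ∈ Finset.range n, (N:ℝ) / ((εf n f i : ℤ):ℝ)^2
        ≤ ∏ i ∈ Finset.range n, q := by
          apply Finset.prod_le_prod
          · intro i hi; positivity
          · intro i hi
            rw [Finset.mem_range] at hi
            have h3 := hεf_posR n f i hi
            have hge : (α:ℝ) ≤ ((εf n f i : ℤ):ℝ) := by
              exact_mod_cast hεf_ge n f i hi
            rw [hq]
            apply div_le_div_of_nonneg_left (by linarith) (by positivity)
            nlinarith
      _ = q ^ n := by rw [Finset.prod_const, Finset.card_range]
  have hdiam' : ∀ n (f : Fin n → E),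
      EMetric.diam (t n f) ≤ ENNReal.ofReal (q ^ n) :=
    fun n f => (hdiam n f).trans (ENNReal.ofReal_le_ofReal (hprod_le n f))
  -- covering
  have hcover : ∀ n : ℕ, Fset N (α:ℝ) ⊆ ⋃ f : Fin n → E, t n f := by
    intro n x hx
    obtain ⟨hx1, hx2, hx3⟩ := hx
    have hdig : ∀ i : ℕ, α ≤ digit N i x := by
      intro i; exact_mod_cast hx3 i
    refine Set.mem_iUnion.mpr ⟨fun i => ⟨digit N i.1 x, hdig i.1⟩, ?_⟩
    refine ⟨hx1, hx2, fun i hi => ?_⟩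
    simp only [ht, hεf, fundInterval, dif_pos hi]
  -- the per-index weight
  set hfun : E → ℝ≥0∞ := fun e => ENNReal.ofReal (((N:ℝ) / ((e:ℤ):ℝ)^2) ^ s)
    with hhfun
  have hterm : ∀ n (f : Fin n → E),
      EMetric.diam (t n f) ^ s ≤ ∏ i : Fin n, hfun (f i) := by
    intro n f
    have h1 : EMetric.diam (t n f) ^ s ≤ (ENNReal.ofReal (∏ i ∈ Finset.range n,
        (N:ℝ) / ((εf n f i : ℤ):ℝ)^2)) ^ s :=
      ENNReal.rpow_le_rpow (hdiam n f) hs0.le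
    have hpos : ∀ i ∈ Finset.range n, (0:ℝ) ≤ (N:ℝ) / ((εf n f i : ℤ):ℝ)^2 :=
      fun i hi => by positivity
    have h2 : (ENNReal.ofReal (∏ i ∈ Finset.range n,
        (N:ℝ) / ((εf n f i : ℤ):ℝ)^2)) ^ s
        = ∏ i ∈ Finset.range n,
            ENNReal.ofReal (((N:ℝ) / ((εf n f i : ℤ):ℝ)^2) ^ s) := by
      rw [ENNReal.ofReal_rpow_of_nonneg (Finset.prod_nonneg hpos) hs0.le,
        ← Real.finset_prod_rpow _ _ hpos s,
        ofReal_fprod _ _ (fun i hi => Real.rpow_nonneg (hpos i hi) s)]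
    have h3 : ∏ i ∈ Finset.range n,
        ENNReal.ofReal (((N:ℝ) / ((εf n f i : ℤ):ℝ)^2) ^ s)
        = ∏ i : Fin n, hfun (f i) := by
      rw [← Fin.prod_univ_eq_prod_range
        (fun i => ENNReal.ofReal (((N:ℝ) / ((εf n f i : ℤ):ℝ)^2) ^ s)) n]
      apply Finset.prod_congr rfl
      intro i _
      simp only [hhfun, hεf, dif_pos i.2]
    rw [h2, h3] at h1
    exact h1
  set C : ℝ≥0∞ := ENNReal.ofReal ((N:ℝ)^s / (1 + (N:ℝ))) with hC
  have hsum : ∀ n : ℕ, ∑' f : Fin n → E, EMetric.diam (t n f) ^ s ≤ C ^ n := by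
    intro n
    calc ∑' f : Fin n → E, EMetric.diam (t n f) ^ s
        ≤ ∑' f : Fin n → E, ∏ i : Fin n, hfun (f i) :=
          ENNReal.tsum_le_tsum (hterm n)
      _ = (∑' e : E, hfun e) ^ n := tsum_pi_prod hfun n
      _ ≤ C ^ n := by
          apply pow_le_pow_left' (sum_hE hN hα hs heq)
  have hr : Filter.Tendsto (fun n : ℕ => ENNReal.ofReal (q ^ n))
      Filter.atTop (nhds 0) := by
    have : Filter.Tendsto (fun n : ℕ => q ^ n) Filter.atTop (nhds 0) :=
      tendsto_pow_atTop_nhds_zero_of_lt_one hq0 hq1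
    have h2 := (ENNReal.continuous_ofReal.tendsto 0).comp this
    simpa [Function.comp_def] using h2
  have hμ : μH[s] (Fset N (α:ℝ)) ≤ Filter.liminf
      (fun n : ℕ => ∑' f : Fin n → E, EMetric.diam (t n f) ^ s) Filter.atTop := by
    exact MeasureTheory.Measure.hausdorffMeasure_le_liminf_tsum s (Fset N (α:ℝ))
      (fun n => ENNReal.ofReal (q ^ n)) hr t
      (Filter.Eventually.of_forall (fun n => hdiam' n))
      (Filter.Eventually.of_forall hcover)
  have hC1 : C < 1 := by
    rw [hC, ENNReal.ofReal_lt_one, div_lt_one (by linarith)]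
    calc (N:ℝ)^s ≤ (N:ℝ)^(1:ℝ) :=
          Real.rpow_le_rpow_of_exponent_le hN1 hs.2
      _ = (N:ℝ) := Real.rpow_one _
      _ < 1 + (N:ℝ) := by linarith
  have hCtend : Filter.Tendsto (fun n : ℕ => C ^ n) Filter.atTop (nhds 0) := by
    rw [hC]
    have hq0' : 0 ≤ (N:ℝ)^s / (1 + (N:ℝ)) := by positivity
    have hq1' : (N:ℝ)^s / (1 + (N:ℝ)) < 1 := by
      rw [← ENNReal.ofReal_lt_one]; exact hC1
    have : Filter.Tendsto (fun n : ℕ => ((N:ℝ)^s / (1 + (N:ℝ))) ^ n)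
        Filter.atTop (nhds 0) := tendsto_pow_atTop_nhds_zero_of_lt_one hq0' hq1'
    have h2 := (ENNReal.continuous_ofReal.tendsto 0).comp this
    simp only [Function.comp_def, ENNReal.ofReal_pow hq0'] at h2
    simpa using h2
  have hlim := Filter.liminf_le_liminf (f := Filter.atTop)
    (Filter.Eventually.of_forall hsum)
  rw [hCtend.liminf_eq] at hlim
  exact le_antisymm (hμ.trans hlim) zero_le

/-- For an integer `α ≥ N + 2` there exists a unique `s ∈ (1/2, 1]` with
`(2s-1)(α-1)^{2s-1} = 1 + N`, and for this `s` one has `dim_H(F_{α,N}) ≤ s`. -/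
theorem stmt_19 (N : ℕ) (hN : 1 ≤ N) (α : ℤ) (hα : (N : ℤ) + 2 ≤ α) :
    ∃ s : ℝ,
      (s ∈ Set.Ioc (1 / 2 : ℝ) 1 ∧
        (2 * s - 1) * ((α : ℝ) - 1) ^ (2 * s - 1) = 1 + (N : ℝ)) ∧
      (∀ s' : ℝ, s' ∈ Set.Ioc (1 / 2 : ℝ) 1 →
        (2 * s' - 1) * ((α : ℝ) - 1) ^ (2 * s' - 1) = 1 + (N : ℝ) → s' = s) ∧
      dimH (Fset N (α : ℝ)) ≤ ENNReal.ofReal s := by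
  obtain ⟨s, hs, heq, huniq⟩ := exist_s hN hα
  refine ⟨s, ⟨hs, heq⟩, huniq, ?_⟩
  have h0 := measure_zero hN hα hs heq
  have hs0 : 0 ≤ s := by have := hs.1; linarith
  have hdim : dimH (Fset N (α:ℝ)) ≤ (s.toNNReal : ℝ≥0∞) := by
    apply dimH_le_of_hausdorffMeasure_ne_top
    rw [Real.coe_toNNReal s hs0, h0]
    exact ENNReal.zero_ne_top
  rwa [ENNReal.ofReal]
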